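/- Let V be a balanced partial isometry on a complex Hilbert space H and let 𝒱 = iXV − iVY (X, Y selfadjoint) be a tangent vector at V which is orthogonal at V, i.e. VV*·𝒱·V*V = 0. Then the quotient Finsler norm of 𝒱 equals its operator norm: |𝒱|_V = ‖𝒱‖. -/

import Mathlib

variable {H : Type*} [NormedAddCommGroup H] [InnerProductSpace ℂ H] [CompleteSpace H]

lemma aux_proj_inner (P : H →L[ℂ] H) (hP : IsSelfAdjoint P) (hP2 : P * P = P) (x y : H) :
    inner (𝕜 := ℂ) (P x) (y - P y) = 0 := by
  have hadj : ContinuousLinearMap.adjoint P = P := by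
    rw [← ContinuousLinearMap.star_eq_adjoint]; exact hP
  have key : ∀ z w : H, inner (𝕜 := ℂ) (P z) w = inner (𝕜 := ℂ) z (P w) := fun z w => by
    conv_lhs => rw [← hadj]
    exact ContinuousLinearMap.adjoint_inner_left P w z
  have h2 : P (y - P y) = 0 := by
    have := congrArg (fun T => T y) hP2
    simp only [ContinuousLinearMap.mul_apply] at this
    simp [map_sub, this]
  rw [key, h2, inner_zero_right]

lemma aux_proj_inner' (P : H →L[ℂ] H) (hP : IsSelfAdjoint P) (hP2 : P * P = P) (x y : H) :
    inner (𝕜 := ℂ) (y - P y) (P x) = 0 := by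
  rw [← inner_conj_symm, aux_proj_inner P hP hP2 x y, map_zero]

lemma aux_pythagoras (P : H →L[ℂ] H) (hP : IsSelfAdjoint P) (hP2 : P * P = P) (x : H) :
    ‖P x‖ ^ 2 + ‖x - P x‖ ^ 2 = ‖x‖ ^ 2 := by
  have h := norm_add_sq_eq_norm_sq_add_norm_sq_of_inner_eq_zero (P x) (x - P x)
    (aux_proj_inner P hP hP2 x x)
  have h2 : P x + (x - P x) = x := by abel
  rw [h2] at h
  simp only [pow_two]
  linarith

lemma aux_proj_norm_le (P : H →L[ℂ] H) (hP : IsSelfAdjoint P) (hP2 : P * P = P) (x : H) :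
    ‖P x‖ ≤ ‖x‖ := by
  nlinarith [aux_pythagoras P hP hP2 x, sq_nonneg ‖x - P x‖, norm_nonneg (P x), norm_nonneg x]

lemma aux_proj_norm_le' (P : H →L[ℂ] H) (hP : IsSelfAdjoint P) (hP2 : P * P = P) (x : H) :
    ‖x - P x‖ ≤ ‖x‖ := by
  nlinarith [aux_pythagoras P hP hP2 x, sq_nonneg ‖P x‖, norm_nonneg (x - P x), norm_nonneg x]

lemma aux_contract (V : H →L[ℂ] H) (hV : V * star V * V = V) (ξ : H) : ‖V ξ‖ ≤ ‖ξ‖ := by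
  have hRsa : IsSelfAdjoint (star V * V) := by
    rw [IsSelfAdjoint, star_mul, star_star]
  have hRR : (star V * V) * (star V * V) = star V * V := by
    calc (star V * V) * (star V * V) = star V * (V * star V * V) := by
          simp only [mul_assoc]
      _ = star V * V := by rw [hV]
  have h1 : (inner (𝕜 := ℂ) (V ξ) (V ξ)) = inner (𝕜 := ℂ) ((star V * V) ξ) ξ := by
    have h := ContinuousLinearMap.adjoint_inner_left V ξ (V ξ)
    rw [← ContinuousLinearMap.star_eq_adjoint] at h
    simpa [ContinuousLinearMap.mul_apply] using h.symm
  have h2 : ‖V ξ‖ ^ 2 ≤ ‖ξ‖ * ‖ξ‖ := by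
    have hre : ‖V ξ‖ ^ 2 = Complex.re (inner (𝕜 := ℂ) ((star V * V) ξ) ξ) := by
      rw [← h1]
      exact InnerProductSpace.norm_sq_eq_re_inner (𝕜 := ℂ) (V ξ)
    rw [hre]
    calc Complex.re (inner (𝕜 := ℂ) ((star V * V) ξ) ξ)
        ≤ ‖(inner (𝕜 := ℂ) ((star V * V) ξ) ξ : ℂ)‖ := Complex.re_le_norm _
      _ ≤ ‖(star V * V) ξ‖ * ‖ξ‖ := norm_inner_le_norm _ _
      _ ≤ ‖ξ‖ * ‖ξ‖ := by
          gcongr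
          exact aux_proj_norm_le _ hRsa hRR ξ
  nlinarith [norm_nonneg (V ξ), norm_nonneg ξ]

lemma aux_opNorm_le (P M u v : H →L[ℂ] H) (hP : IsSelfAdjoint P) (hP2 : P * P = P)
    (c : ℝ) (hc : 0 ≤ c)
    (hM : ∀ ξ, M ξ = u (P ξ) + v (ξ - P ξ))
    (horth : ∀ ξ η, inner (𝕜 := ℂ) (u ξ) (v η) = 0)
    (hu : ∀ ξ, ‖u ξ‖ ≤ c * ‖ξ‖) (hv : ∀ ξ, ‖v ξ‖ ≤ c * ‖ξ‖) :
    ‖M‖ ≤ c := by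
  apply ContinuousLinearMap.opNorm_le_bound _ hc
  intro ξ
  have h1 : ‖M ξ‖ ^ 2 = ‖u (P ξ)‖ ^ 2 + ‖v (ξ - P ξ)‖ ^ 2 := by
    rw [hM ξ]
    have := norm_add_sq_eq_norm_sq_add_norm_sq_of_inner_eq_zero _ _ (horth (P ξ) (ξ - P ξ))
    simp only [pow_two]
    exact this
  have h2 := aux_pythagoras P hP hP2 ξ
  have h3 : ‖u (P ξ)‖ ^ 2 ≤ (c * ‖P ξ‖) ^ 2 := pow_le_pow_left₀ (norm_nonneg _) (hu (P ξ)) 2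
  have h4 : ‖v (ξ - P ξ)‖ ^ 2 ≤ (c * ‖ξ - P ξ‖) ^ 2 :=
    pow_le_pow_left₀ (norm_nonneg _) (hv (ξ - P ξ)) 2
  have h2' : (c * ‖P ξ‖) ^ 2 + (c * ‖ξ - P ξ‖) ^ 2 = (c * ‖ξ‖) ^ 2 := by
    rw [mul_pow, mul_pow, mul_pow, ← mul_add, h2]
  have h5 : ‖M ξ‖ ^ 2 ≤ (c * ‖ξ‖) ^ 2 := by linarith
  nlinarith [norm_nonneg (M ξ), mul_nonneg hc (norm_nonneg ξ)]

/-- The quotient Finsler norm of a tangent vector `W` at a partial isometry `V`: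
`|W|_V = inf { max(‖A‖,‖B‖) : A,B selfadjoint, iAV − iVB = W }`. -/
noncomputable def finslerNorm (V W : H →L[ℂ] H) : ℝ :=
  sInf { r : ℝ | ∃ A B : H →L[ℂ] H, IsSelfAdjoint A ∧ IsSelfAdjoint B ∧
    Complex.I • (A * V) - Complex.I • (V * B) = W ∧ r = max ‖A‖ ‖B‖ }

/-- Let `V` be a balanced partial isometry (i.e. `V = U P W*` with
`U`, `W` unitary and `P` an orthogonal projection) and `𝒱 = iXV − iVY` a tangent vector
at `V` which is orthogonal at `V`, i.e. `VV* 𝒱 V*V = 0`.  Then `|𝒱|_V = ‖𝒱‖`. -/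
theorem finslerNorm_eq_opNorm_of_orthogonal
    (V X Y : H →L[ℂ] H) (hV : V * star V * V = V)
    (hbal : ∃ U W P : H →L[ℂ] H, U ∈ unitary (H →L[ℂ] H) ∧ W ∈ unitary (H →L[ℂ] H) ∧
      IsSelfAdjoint P ∧ P * P = P ∧ V = U * P * star W)
    (hX : IsSelfAdjoint X) (hY : IsSelfAdjoint Y)
    (𝒱 : H →L[ℂ] H) (h𝒱 : 𝒱 = Complex.I • (X * V) - Complex.I • (V * Y))
    (horth : (V * star V) * 𝒱 * (star V * V) = 0) :
    finslerNorm V 𝒱 = ‖𝒱‖ := by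
  clear hbal hX hY
  obtain ⟨Q, R, hQdef, hRdef⟩ : ∃ Q R : H →L[ℂ] H, Q = V * star V ∧ R = star V * V :=
    ⟨_, _, rfl, rfl⟩
  have hQV : Q * V = V := by rw [hQdef]; exact hV
  have hVR : V * R = V := by rw [hRdef, ← mul_assoc]; exact hV
  have hQsa : IsSelfAdjoint Q := by rw [hQdef, IsSelfAdjoint, star_mul, star_star]
  have hRsa : IsSelfAdjoint R := by rw [hRdef, IsSelfAdjoint, star_mul, star_star]
  have hQQ : Q * Q = Q := by
    rw [hQdef]
    calc (V * star V) * (V * star V) = (V * star V * V) * star V := by simp only [mul_assoc]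
      _ = V * star V := by rw [hV]
  have hRR : R * R = R := by
    rw [hRdef]
    calc (star V * V) * (star V * V) = star V * (V * star V * V) := by simp only [mul_assoc]
      _ = star V * V := by rw [hV]
  have hsVV : star V * (V * star V) = star V := by
    simpa only [star_mul, star_star, mul_assoc] using congrArg star hV
  have hRsV : R * star V = star V := by rw [hRdef, mul_assoc]; exact hsVV
  have hsVQ : star V * Q = star V := by rw [hQdef]; exact hsVV
  have horth' : Q * 𝒱 * R = 0 := by rw [hQdef, hRdef]; exact horth
  have horthQR : Q * (𝒱 * R) = 0 := by rw [← mul_assoc]; exact horth'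
  have hstar : R * (star 𝒱 * Q) = 0 := by
    have h := congrArg star horth'
    simp only [star_mul, star_zero, hQsa.star_eq, hRsa.star_eq, mul_assoc] at h
    simpa only [mul_assoc] using h
  have hVsV : V * (star 𝒱 * V) = 0 := by
    calc V * (star 𝒱 * V) = (V * R) * (star 𝒱 * (Q * V)) := by rw [hVR, hQV]
      _ = V * (R * (star 𝒱 * Q)) * V := by simp only [mul_assoc]
      _ = 0 := by rw [hstar, mul_zero, zero_mul]
  have hQVm : ∀ M : H →L[ℂ] H, Q * (V * M) = V * M := fun M => by rw [← mul_assoc, hQV]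
  have hkey : ∀ A B : H →L[ℂ] H, Complex.I • (A * V) - Complex.I • (V * B) = 𝒱 →
      Q * (A * V) = V * (B * R) := by
    intro A B hrep
    have h0 : Q * 𝒱 * R = 0 := horth'
    rw [← hrep] at h0
    simp only [mul_sub, sub_mul, smul_mul_assoc, mul_smul_comm, mul_assoc, hVR] at h0
    rw [hQVm (B * R)] at h0
    have h1 := sub_eq_zero.mp h0
    exact smul_right_injective _ Complex.I_ne_zero h1
  have hsum : Q * 𝒱 + 𝒱 * R = 𝒱 := by
    have hk := hkey X Y h𝒱.symm
    rw [h𝒱]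
    simp only [mul_sub, sub_mul, smul_mul_assoc, mul_smul_comm, mul_assoc, hVR]
    rw [hQVm Y, hk]
    abel
  have hcontrV : ∀ ξ, ‖V ξ‖ ≤ ‖ξ‖ := aux_contract V hV
  have hpi' : star V * star (star V) * star V = star V := by
    rw [star_star, mul_assoc]; exact hsVV
  have hcontrsV : ∀ ξ, ‖(star V) ξ‖ ≤ ‖ξ‖ := aux_contract (star V) hpi'
  -- the optimal representation
  obtain ⟨u, hudef⟩ : ∃ u : H →L[ℂ] H, u = (-Complex.I) • (𝒱 * star V) := ⟨_, rfl⟩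
  obtain ⟨v, hvdef⟩ : ∃ v : H →L[ℂ] H, v = Complex.I • (V * star 𝒱) := ⟨_, rfl⟩
  obtain ⟨s, hsdef⟩ : ∃ s : H →L[ℂ] H, s = Complex.I • (star V * 𝒱) := ⟨_, rfl⟩
  obtain ⟨t, htdef⟩ : ∃ t : H →L[ℂ] H, t = (-Complex.I) • (star 𝒱 * V) := ⟨_, rfl⟩
  obtain ⟨A, hAdef⟩ : ∃ A : H →L[ℂ] H, A = u + v := ⟨_, rfl⟩
  obtain ⟨B, hBdef⟩ : ∃ B : H →L[ℂ] H, B = s + t := ⟨_, rfl⟩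
  have hAsa : IsSelfAdjoint A := by
    rw [IsSelfAdjoint, hAdef, hudef, hvdef]
    simp only [star_add, star_smul, star_mul, star_star, Complex.star_def, map_neg,
      Complex.conj_I, neg_neg]
    abel
  have hBsa : IsSelfAdjoint B := by
    rw [IsSelfAdjoint, hBdef, hsdef, htdef]
    simp only [star_add, star_smul, star_mul, star_star, Complex.star_def, map_neg,
      Complex.conj_I, neg_neg]
    abel
  have hArep : Complex.I • (A * V) = 𝒱 * R := by
    rw [hAdef, hudef, hvdef]
    simp only [add_mul, smul_mul_assoc, mul_assoc, hVsV, ← hRdef, smul_zero, add_zero,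
      smul_smul]
    rw [show Complex.I * -Complex.I = 1 by simp [Complex.I_mul_I], one_smul]
  have hBrep : Complex.I • (V * B) = -(Q * 𝒱) := by
    rw [hBdef, hsdef, htdef]
    simp only [mul_add, mul_smul_comm, hVsV, smul_zero, add_zero, smul_smul]
    rw [← mul_assoc, ← hQdef, Complex.I_mul_I, neg_smul, one_smul]
  have hrepAB : Complex.I • (A * V) - Complex.I • (V * B) = 𝒱 := by
    rw [hArep, hBrep, sub_neg_eq_add, add_comm]
    exact hsum
  -- ‖A‖ ≤ ‖𝒱‖
  have hnormA : ‖A‖ ≤ ‖𝒱‖ := by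
    have huQ : u * Q = u := by
      rw [hudef]; simp only [smul_mul_assoc, mul_assoc, hsVQ]
    have hVstarQ : V * (star 𝒱 * Q) = 0 := by
      calc V * (star 𝒱 * Q) = (V * R) * (star 𝒱 * Q) := by rw [hVR]
        _ = V * (R * (star 𝒱 * Q)) := by rw [mul_assoc]
        _ = 0 := by rw [hstar, mul_zero]
    have hvQ : v * Q = 0 := by
      rw [hvdef]; simp only [smul_mul_assoc, mul_assoc, hVstarQ, smul_zero]
    have hdecompA : A = u * Q + v * (1 - Q) := by
      rw [mul_sub, mul_one, huQ, hvQ, sub_zero, hAdef]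
    have hQu : Q * u = 0 := by
      have h1 : Q * (𝒱 * star V) = 0 := by
        calc Q * (𝒱 * star V) = Q * (𝒱 * (R * star V)) := by rw [hRsV]
          _ = Q * (𝒱 * R) * star V := by simp only [mul_assoc]
          _ = 0 := by rw [horthQR, zero_mul]
      rw [hudef, mul_smul_comm, h1, smul_zero]
    have hQv : Q * v = v := by
      rw [hvdef, mul_smul_comm, hQVm (star 𝒱)]
    apply aux_opNorm_le Q A u v hQsa hQQ ‖𝒱‖ (norm_nonneg 𝒱)
    · intro ξ
      have := congrArg (fun M : H →L[ℂ] H => M ξ) hdecompA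
      simpa [ContinuousLinearMap.mul_apply, ContinuousLinearMap.sub_apply,
        ContinuousLinearMap.one_apply, ContinuousLinearMap.add_apply] using this
    · intro ξ η
      have h1 : Q (u ξ) = 0 := by
        have := congrArg (fun M : H →L[ℂ] H => M ξ) hQu
        simpa [ContinuousLinearMap.mul_apply] using this
      have h2 : Q (v η) = v η := by
        have := congrArg (fun M : H →L[ℂ] H => M η) hQv
        simpa [ContinuousLinearMap.mul_apply] using this
      calc inner (𝕜 := ℂ) (u ξ) (v η) = inner (𝕜 := ℂ) (u ξ - Q (u ξ)) (Q (v η)) := by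
            rw [h1, h2, sub_zero]
        _ = 0 := aux_proj_inner' Q hQsa hQQ (v η) (u ξ)
    · intro ξ
      have h1 : u ξ = (-Complex.I) • (𝒱 ((star V) ξ)) := by
        rw [hudef]
        simp [ContinuousLinearMap.smul_apply, ContinuousLinearMap.mul_apply]
      rw [h1, norm_smul]
      simp only [norm_neg, Complex.norm_I, one_mul]
      calc ‖𝒱 ((star V) ξ)‖ ≤ ‖𝒱‖ * ‖(star V) ξ‖ := 𝒱.le_opNorm _
        _ ≤ ‖𝒱‖ * ‖ξ‖ := by gcongr; exact hcontrsV ξ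
    · intro ξ
      have h1 : v ξ = Complex.I • (V ((star 𝒱) ξ)) := by
        rw [hvdef]
        simp [ContinuousLinearMap.smul_apply, ContinuousLinearMap.mul_apply]
      rw [h1, norm_smul]
      simp only [Complex.norm_I, one_mul]
      calc ‖V ((star 𝒱) ξ)‖ ≤ ‖(star 𝒱) ξ‖ := hcontrV _
        _ ≤ ‖star 𝒱‖ * ‖ξ‖ := (star 𝒱).le_opNorm _
        _ = ‖𝒱‖ * ‖ξ‖ := by rw [norm_star]
  -- ‖B‖ ≤ ‖𝒱‖
  have hnormB : ‖B‖ ≤ ‖𝒱‖ := by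
    have htR : t * R = t := by
      rw [htdef]; simp only [smul_mul_assoc, mul_assoc, hVR]
    have hsVQ𝒱 : star V * (Q * (𝒱 * R)) = 0 := by rw [horthQR, mul_zero]
    have hsR : s * R = 0 := by
      rw [hsdef]
      simp only [smul_mul_assoc, mul_assoc]
      calc Complex.I • (star V * (𝒱 * R)) = Complex.I • ((star V * Q) * (𝒱 * R)) := by
            rw [hsVQ]
        _ = Complex.I • (star V * (Q * (𝒱 * R))) := by rw [mul_assoc]
        _ = 0 := by rw [hsVQ𝒱, smul_zero]
    have hdecompB : B = t * R + s * (1 - R) := by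
      rw [mul_sub, mul_one, htR, hsR, sub_zero, hBdef, add_comm]
    have hRt : R * t = 0 := by
      have h1 : R * (star 𝒱 * V) = 0 := by
        calc R * (star 𝒱 * V) = R * (star 𝒱 * (Q * V)) := by rw [hQV]
          _ = R * (star 𝒱 * Q) * V := by simp only [mul_assoc]
          _ = 0 := by rw [hstar, zero_mul]
      rw [htdef, mul_smul_comm, h1, smul_zero]
    have hRs : R * s = s := by
      rw [hsdef, mul_smul_comm, ← mul_assoc, hRsV]
    apply aux_opNorm_le R B t s hRsa hRR ‖𝒱‖ (norm_nonneg 𝒱)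
    · intro ξ
      have := congrArg (fun M : H →L[ℂ] H => M ξ) hdecompB
      simpa [ContinuousLinearMap.mul_apply, ContinuousLinearMap.sub_apply,
        ContinuousLinearMap.one_apply, ContinuousLinearMap.add_apply] using this
    · intro ξ η
      have h1 : R (t ξ) = 0 := by
        have := congrArg (fun M : H →L[ℂ] H => M ξ) hRt
        simpa [ContinuousLinearMap.mul_apply] using this
      have h2 : R (s η) = s η := by
        have := congrArg (fun M : H →L[ℂ] H => M η) hRs
        simpa [ContinuousLinearMap.mul_apply] using this
      calc inner (𝕜 := ℂ) (t ξ) (s η) = inner (𝕜 := ℂ) (t ξ - R (t ξ)) (R (s η)) := by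
            rw [h1, h2, sub_zero]
        _ = 0 := aux_proj_inner' R hRsa hRR (s η) (t ξ)
    · intro ξ
      have h1 : t ξ = (-Complex.I) • ((star 𝒱) (V ξ)) := by
        rw [htdef]
        simp [ContinuousLinearMap.smul_apply, ContinuousLinearMap.mul_apply]
      rw [h1, norm_smul]
      simp only [norm_neg, Complex.norm_I, one_mul]
      calc ‖(star 𝒱) (V ξ)‖ ≤ ‖star 𝒱‖ * ‖V ξ‖ := (star 𝒱).le_opNorm _
        _ ≤ ‖star 𝒱‖ * ‖ξ‖ := by gcongr; exact hcontrV ξ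
        _ = ‖𝒱‖ * ‖ξ‖ := by rw [norm_star]
    · intro ξ
      have h1 : s ξ = Complex.I • ((star V) (𝒱 ξ)) := by
        rw [hsdef]
        simp [ContinuousLinearMap.smul_apply, ContinuousLinearMap.mul_apply]
      rw [h1, norm_smul]
      simp only [Complex.norm_I, one_mul]
      calc ‖(star V) (𝒱 ξ)‖ ≤ ‖𝒱 ξ‖ := hcontrsV _
        _ ≤ ‖𝒱‖ * ‖ξ‖ := 𝒱.le_opNorm _
  -- the lower bound: every representation has max ≥ ‖𝒱‖
  have hlb : ∀ r ∈ { r : ℝ | ∃ A B : H →L[ℂ] H, IsSelfAdjoint A ∧ IsSelfAdjoint B ∧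
      Complex.I • (A * V) - Complex.I • (V * B) = 𝒱 ∧ r = max ‖A‖ ‖B‖ }, ‖𝒱‖ ≤ r := by
    rintro r ⟨A', B', hA'sa, hB'sa, hrep', rfl⟩
    have hk' := hkey A' B' hrep'
    obtain ⟨u', hu'def⟩ : ∃ u' : H →L[ℂ] H,
        u' = Complex.I • (A' * V - Q * (A' * V)) := ⟨_, rfl⟩
    obtain ⟨v', hv'def⟩ : ∃ v' : H →L[ℂ] H,
        v' = (-Complex.I) • (Q * (V * B')) := ⟨_, rfl⟩
    have hc : (0:ℝ) ≤ max ‖A'‖ ‖B'‖ := le_trans (norm_nonneg A') (le_max_left _ _)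
    have hdecomp : 𝒱 = u' * R + v' * (1 - R) := by
      have eu : u' * R = u' := by
        rw [hu'def]
        simp only [smul_mul_assoc, sub_mul, mul_assoc, hVR]
      have evR : v' * R = (-Complex.I) • (V * (B' * R)) := by
        rw [hv'def]
        simp only [smul_mul_assoc, mul_assoc]
        rw [hQVm (B' * R)]
      have ev : v' * (1 - R) = v' + Complex.I • (V * (B' * R)) := by
        rw [mul_sub, mul_one, evR, neg_smul, sub_neg_eq_add]
      rw [eu, ev, ← hrep', hu'def, hv'def, hk', hQVm B']
      simp only [smul_sub, neg_smul]
      abel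
    apply aux_opNorm_le R 𝒱 u' v' hRsa hRR (max ‖A'‖ ‖B'‖) hc
    · intro ξ
      have := congrArg (fun M : H →L[ℂ] H => M ξ) hdecomp
      simpa [ContinuousLinearMap.mul_apply, ContinuousLinearMap.sub_apply,
        ContinuousLinearMap.one_apply, ContinuousLinearMap.add_apply] using this
    · intro ξ η
      have hQu' : Q * u' = 0 := by
        rw [hu'def, mul_smul_comm, mul_sub]
        simp only [← mul_assoc, hQQ]
        simp
      have hQv' : Q * v' = v' := by
        rw [hv'def, mul_smul_comm]
        simp only [← mul_assoc, hQQ]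
      have h1 : Q (u' ξ) = 0 := by
        have := congrArg (fun M : H →L[ℂ] H => M ξ) hQu'
        simpa [ContinuousLinearMap.mul_apply] using this
      have h2 : Q (v' η) = v' η := by
        have := congrArg (fun M : H →L[ℂ] H => M η) hQv'
        simpa [ContinuousLinearMap.mul_apply] using this
      calc inner (𝕜 := ℂ) (u' ξ) (v' η)
          = inner (𝕜 := ℂ) (u' ξ - Q (u' ξ)) (Q (v' η)) := by rw [h1, h2, sub_zero]
        _ = 0 := aux_proj_inner' Q hQsa hQQ (v' η) (u' ξ)
    · intro ξ
      have h1 : u' ξ = Complex.I • (A' (V ξ) - Q (A' (V ξ))) := by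
        rw [hu'def]
        simp [ContinuousLinearMap.smul_apply, ContinuousLinearMap.mul_apply,
          ContinuousLinearMap.sub_apply]
      rw [h1, norm_smul]
      simp only [Complex.norm_I, one_mul]
      calc ‖A' (V ξ) - Q (A' (V ξ))‖ ≤ ‖A' (V ξ)‖ := aux_proj_norm_le' Q hQsa hQQ _
        _ ≤ ‖A'‖ * ‖V ξ‖ := A'.le_opNorm _
        _ ≤ ‖A'‖ * ‖ξ‖ := by gcongr; exact hcontrV ξ
        _ ≤ max ‖A'‖ ‖B'‖ * ‖ξ‖ := by gcongr; exact le_max_left _ _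
    · intro ξ
      have h1 : v' ξ = (-Complex.I) • (Q (V (B' ξ))) := by
        rw [hv'def]
        simp [ContinuousLinearMap.smul_apply, ContinuousLinearMap.mul_apply]
      rw [h1, norm_smul]
      simp only [norm_neg, Complex.norm_I, one_mul]
      calc ‖Q (V (B' ξ))‖ ≤ ‖V (B' ξ)‖ := aux_proj_norm_le Q hQsa hQQ _
        _ ≤ ‖B' ξ‖ := hcontrV _
        _ ≤ ‖B'‖ * ‖ξ‖ := B'.le_opNorm _
        _ ≤ max ‖A'‖ ‖B'‖ * ‖ξ‖ := by gcongr; exact le_max_right _ _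
  -- conclude
  have hmem : max ‖A‖ ‖B‖ ∈ { r : ℝ | ∃ A B : H →L[ℂ] H, IsSelfAdjoint A ∧ IsSelfAdjoint B ∧
      Complex.I • (A * V) - Complex.I • (V * B) = 𝒱 ∧ r = max ‖A‖ ‖B‖ } :=
    ⟨A, B, hAsa, hBsa, hrepAB, rfl⟩
  rw [finslerNorm]
  apply le_antisymm
  · calc sInf _ ≤ max ‖A‖ ‖B‖ := csInf_le ⟨‖𝒱‖, fun r hr => hlb r hr⟩ hmem
      _ ≤ ‖𝒱‖ := max_le hnormA hnormB
  · exact le_csInf ⟨_, hmem⟩ hlb
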